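/- arXiv:1406.4704 — 2 statements merged into one kernel-verified Lean document; each statement's English description precedes it below -/
import Mathlib

section
/- With h = T/m, the conditional variance error of the time-changed Euler scheme is d'(s) = (h²/T)(1 - h/(T-s))² a for s ∈ [0, T-h]; it satisfies d'(s) ≤ (h/m)·a, it vanishes at s = T - h, and d'((i-1)h)/d((i-1)h) = (m-i)²/(m(m-i+1)) for i = 1,...,m, where d(s) = h² a/(T-s). -/
/-- With `h = T/m`, the conditional variance error of the time-changed Euler scheme is
`d'(s) = (h²/T)(1 - h/(T-s))² a`; it satisfies `d'(s) ≤ (h/m)·a`, it vanishes at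
`s = T-h`, and `d'((i-1)h)/d((i-1)h) = (m-i)²/(m(m-i+1))` for `i = 1,…,m`, where
`d(s) = h² a/(T-s)`. -/
theorem stmt_5 (T a : ℝ) (hT : 0 < T) (ha : 0 < a) (m : ℕ) (hm : 2 ≤ m)
    (h : ℝ) (hh : h = T / m) :
    (∀ s ∈ Set.Icc (0:ℝ) (T - h),
      (h ^ 2 / T) * (1 - h / (T - s)) ^ 2 * a ≤ (h / m) * a) ∧
    (h ^ 2 / T) * (1 - h / (T - (T - h))) ^ 2 * a = 0 ∧
    (∀ i ∈ Finset.Icc 1 m,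
      ((h ^ 2 / T) * (1 - h / (T - (i - 1) * h)) ^ 2 * a) /
          (h ^ 2 * a / (T - (i - 1) * h)) =
        ((m : ℝ) - i) ^ 2 / ((m : ℝ) * ((m : ℝ) - i + 1))) := by
  have hm2 : (2:ℝ) ≤ (m:ℝ) := by exact_mod_cast hm
  have hm0 : (0:ℝ) < (m:ℝ) := by linarith
  have hh0 : 0 < h := by rw [hh]; exact div_pos hT hm0
  have hTm : T = (m:ℝ) * h := by rw [hh]; field_simp
  refine ⟨?_, ?_, ?_⟩
  · intro s hs
    have hTs : h ≤ T - s := by linarith [hs.2]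
    have h1 : 0 < T - s := lt_of_lt_of_le hh0 hTs
    have hx0 : 0 ≤ 1 - h / (T - s) := sub_nonneg.mpr ((div_le_one h1).mpr hTs)
    have hx1 : 1 - h / (T - s) ≤ 1 := by
      have : 0 < h / (T - s) := div_pos hh0 h1
      linarith
    have hsq : (1 - h / (T - s)) ^ 2 ≤ 1 := by nlinarith
    have hcoef : h ^ 2 / T = h / m := by rw [hTm]; field_simp
    rw [hcoef]
    have hhm : 0 < h / m := div_pos hh0 hm0
    nlinarith [mul_le_mul_of_nonneg_right (mul_le_mul_of_nonneg_left hsq hhm.le) ha.le]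
  · have h2 : T - (T - h) = h := by ring
    rw [h2, div_self hh0.ne']
    ring
  · intro i hi
    obtain ⟨hi1, hi2⟩ := Finset.mem_Icc.mp hi
    have hi1R : (1:ℝ) ≤ (i:ℝ) := by exact_mod_cast hi1
    have hiR : (i:ℝ) ≤ (m:ℝ) := by exact_mod_cast hi2
    have hk : (0:ℝ) < (m:ℝ) - i + 1 := by linarith
    have hTi : T - ((i:ℝ) - 1) * h = ((m:ℝ) - i + 1) * h := by rw [hTm]; ring
    rw [hTi, hTm]
    field_simp
    ring
end

section
/- Define J(s) = (T−s)²/T · H̃(τ(s)) with τ(s) = s(2−s/T) and H̃(t) = K(t)^{−1}, K(t)=∫_t^T e^{B̃(T−u)} ã e^{B̃'(T−u)} du, ã symmetric positive definite. Then lim_{s↑T} ã J(s) = I. -/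
open Filter Matrix

lemma aux_slope (h : ℝ → ℝ) (hc : Continuous h) (T : ℝ) :
    Filter.Tendsto (fun t => (T - t)⁻¹ * ∫ u in t..T, h u) (nhdsWithin T (Set.Iio T))
      (nhds (h T)) := by
  have hF : HasDerivAt (fun x => ∫ u in T..x, h u) (h T) T :=
    intervalIntegral.integral_hasDerivAt_right (hc.intervalIntegrable _ _)
      (hc.stronglyMeasurableAtFilter _ _) hc.continuousAt
  have h1 := hasDerivAt_iff_tendsto_slope.1 hF
  have h2 := h1.mono_left (nhdsWithin_mono _ (fun x hx => ne_of_lt hx))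
  refine h2.congr fun t => ?_
  have hFT : (∫ u in T..T, h u) = 0 := intervalIntegral.integral_same
  have hsym : (∫ u in T..t, h u) = -∫ u in t..T, h u := intervalIntegral.integral_symm _ _
  rw [slope_def_field, hFT, hsym, sub_zero]
  rw [neg_div, ← div_neg, neg_sub, div_eq_inv_mul]

/-- With `J(s) = (T-s)²/T · H̃(τ(s))`, `τ(s) = s(2-s/T)`, `H̃(t) = K(t)⁻¹`,
`K(t) = ∫_t^T e^{B̃(T-u)} atil e^{B̃'(T-u)} du` and `atil` symmetric positive definite,
one has `atil J(s) → I` as `s ↑ T`. -/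
theorem stmt_13 (d : ℕ) (T : ℝ) (hT : 0 < T) (B atil : Matrix (Fin d) (Fin d) ℝ)
    (hpos : atil.PosDef)
    (K : ℝ → Matrix (Fin d) (Fin d) ℝ)
    (hK : K = fun t => Matrix.of fun i j => ∫ u in t..T,
      (NormedSpace.exp ((T - u) • B) * atil * (NormedSpace.exp ((T - u) • B))ᵀ) i j)
    (Htil : ℝ → Matrix (Fin d) (Fin d) ℝ) (hH : ∀ t, Htil t = (K t)⁻¹)
    (τ : ℝ → ℝ) (hτ : τ = fun s => s * (2 - s / T))
    (J : ℝ → Matrix (Fin d) (Fin d) ℝ)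
    (hJ : J = fun s => ((T - s) ^ 2 / T) • Htil (τ s)) :
    Filter.Tendsto (fun s => atil * J s) (nhdsWithin T (Set.Iio T)) (nhds 1) := by
  have hdetu : IsUnit atil.det := isUnit_iff_ne_zero.2 hpos.det_pos.ne'
  -- the integrand
  set f : ℝ → Matrix (Fin d) (Fin d) ℝ := fun u =>
    NormedSpace.exp ((T - u) • B) * atil * (NormedSpace.exp ((T - u) • B))ᵀ with hf
  have hec : Continuous fun u : ℝ => NormedSpace.exp ((T - u) • B) := by
    letI : NormedRing (Matrix (Fin d) (Fin d) ℝ) := Matrix.linftyOpNormedRing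
    letI : NormedAlgebra ℝ (Matrix (Fin d) (Fin d) ℝ) := Matrix.linftyOpNormedAlgebra
    letI : NormedAlgebra ℚ (Matrix (Fin d) (Fin d) ℝ) := Matrix.linftyOpNormedAlgebra
    exact NormedSpace.exp_continuous.comp
      ((continuous_const.sub continuous_id).smul continuous_const)
  have hfc : Continuous f :=
    (hec.matrix_mul continuous_const).matrix_mul hec.matrix_transpose
  have hfT : f T = atil := by
    simp [hf, NormedSpace.exp_zero]
  -- key algebraic identity
  have hkey : ∀ s, T - τ s = (T - s) ^ 2 / T := by
    intro s; rw [hτ]; field_simp; ring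
  -- τ maps Iio T to Iio T and tends to T
  have hτc : Continuous τ := by
    rw [hτ]
    exact continuous_id.mul (continuous_const.sub (continuous_id.div_const _))
  have hτT : τ T = T := by
    rw [hτ]; field_simp; norm_num
  have hτtend : Tendsto τ (nhdsWithin T (Set.Iio T)) (nhdsWithin T (Set.Iio T)) := by
    apply tendsto_nhdsWithin_of_tendsto_nhds_of_eventually_within
    · have := hτc.continuousAt (x := T)
      rw [ContinuousAt, hτT] at this
      exact this.mono_left nhdsWithin_le_nhds
    · filter_upwards [self_mem_nhdsWithin] with s (hs : s < T)
      have : 0 < (T - s) ^ 2 / T := div_pos (pow_pos (sub_pos.2 hs) 2) hT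
      rw [← hkey s] at this
      exact Set.mem_Iio.2 (by linarith)
  -- the normalized kernel
  set G : ℝ → Matrix (Fin d) (Fin d) ℝ := fun t => (T - t)⁻¹ • K t with hG
  have hGtend : Tendsto G (nhdsWithin T (Set.Iio T)) (nhds atil) := by
    refine tendsto_pi_nhds.2 ?_
    intro i
    rw [tendsto_pi_nhds]
    intro j
    have h1 := aux_slope (fun u => f u i j) ((continuous_apply j).comp
      ((continuous_apply i).comp hfc)) T
    have : atil i j = f T i j := by rw [hfT]
    rw [this]
    refine h1.congr fun t => ?_
    simp only [hG, hK, Matrix.smul_apply, Matrix.of_apply, smul_eq_mul]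
    rfl
  have hGτ : Tendsto (fun s => G (τ s)) (nhdsWithin T (Set.Iio T)) (nhds atil) :=
    hGtend.comp hτtend
  -- determinant eventually nonzero
  have hdettend : Tendsto (fun s => (G (τ s)).det) (nhdsWithin T (Set.Iio T))
      (nhds atil.det) := (Continuous.matrix_det continuous_id).continuousAt.tendsto.comp hGτ
  have hdetne : ∀ᶠ s in nhdsWithin T (Set.Iio T), (G (τ s)).det ≠ 0 :=
    hdettend.eventually_ne hpos.det_pos.ne'
  -- inverse is continuous at atil
  have hinvcont : ContinuousAt Inv.inv atil := by
    apply continuousAt_matrix_inv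
    have : (Ring.inverse : ℝ → ℝ) = Inv.inv := by
      funext x; exact Ring.inverse_eq_inv x
    rw [this]
    exact continuousAt_inv₀ hpos.det_pos.ne'
  have hGinv : Tendsto (fun s => (G (τ s))⁻¹) (nhdsWithin T (Set.Iio T)) (nhds atil⁻¹) :=
    hinvcont.tendsto.comp hGτ
  -- final combination
  have hmul : Tendsto (fun s => atil * (G (τ s))⁻¹) (nhdsWithin T (Set.Iio T))
      (nhds (atil * atil⁻¹)) :=
    ((continuous_const.matrix_mul continuous_id).continuousAt.tendsto).comp hGinv
  rw [Matrix.mul_nonsing_inv atil hdetu] at hmul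
  refine hmul.congr' ?_
  filter_upwards [self_mem_nhdsWithin, hdetne] with s (hs : s < T) hds
  have hne : T - τ s ≠ 0 := by
    rw [hkey s]
    exact (div_pos (pow_pos (sub_pos.2 hs) 2) hT).ne'
  have hKeq : K (τ s) = (T - τ s) • G (τ s) := by
    rw [hG]
    rw [smul_smul, mul_inv_cancel₀ hne, one_smul]
  symm
  simp only [hJ, hH]
  congr 1
  haveI : Invertible (T - τ s) := invertibleOfNonzero hne
  have hsm := Matrix.inv_smul (T - τ s) (A := G (τ s)) (isUnit_iff_ne_zero.2 hds)
  rw [← hkey s, hKeq, hsm, smul_smul, mul_invOf_self, one_smul]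
end
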